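/- Let S be a compact metric space, let Φ : [0,∞) × S → S be a continuous semiflow, and let A ⊆ S be a compact set that is asymptotically stable for Φ, i.e., (i) for every open set U ⊇ A there is an open set W with A ⊆ W ⊆ S such that Φ(t,x) ∈ U for all t ≥ 0 and x ∈ W, and (ii) there is an open set W₀ ⊇ A such that dist(Φ(t,x), A) → 0 as t → ∞ for every x ∈ W₀. Then there exists a compact set V ⊆ S that is a neighborhood of A in S and satisfies Φ(t, V) ⊆ interior(V) for every t > 0. -/

import Mathlib

open Set Filter Topology MeasureTheory

/-- **Compact attracting neighborhood mapped into its own interior.**  If `A`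
is a compact asymptotically stable set for a continuous semiflow `Φ` on a
compact metric space `S`, then there exists a compact neighborhood `V` of `A`
with `Φ(t, V) ⊆ interior V` for every `t > 0`. -/
theorem exists_compact_attracting_nbhd {S : Type*} [MetricSpace S] [CompactSpace S]
    (Φ : ℝ → S → S)
    (hΦ_cont : ContinuousOn (fun p : ℝ × S => Φ p.1 p.2)
      (Set.Ici (0 : ℝ) ×ˢ (Set.univ : Set S)))
    (hΦ_zero : ∀ x : S, Φ 0 x = x)
    (hΦ_semigroup : ∀ t s : ℝ, 0 ≤ t → 0 ≤ s → ∀ x : S,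
      Φ (t + s) x = Φ t (Φ s x))
    (A : Set S) (hA : IsCompact A)
    -- (i) stability
    (hstab : ∀ U : Set S, IsOpen U → A ⊆ U →
      ∃ W : Set S, IsOpen W ∧ A ⊆ W ∧ ∀ x ∈ W, ∀ t : ℝ, 0 ≤ t → Φ t x ∈ U)
    -- (ii) local attractivity
    (hattr : ∃ W₀ : Set S, IsOpen W₀ ∧ A ⊆ W₀ ∧ ∀ x ∈ W₀,
      Tendsto (fun t : ℝ => Metric.infDist (Φ t x) A) atTop (𝓝 0)) :
    ∃ V : Set S, IsCompact V ∧ A ⊆ interior V ∧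
      ∀ t : ℝ, 0 < t → ∀ x ∈ V, Φ t x ∈ interior V := by
  classical
  rcases A.eq_empty_or_nonempty with rfl | hAne
  · exact ⟨∅, isCompact_empty, by simp, fun t ht x hx => absurd hx (notMem_empty x)⟩
  obtain ⟨W₀, hW₀o, hAW₀, hW₀attr⟩ := hattr
  -- the globally continuous extension of the flow
  set Ψ : ℝ → S → S := fun t x => Φ (max t 0) x with hΨdef
  have hΨc : Continuous fun p : ℝ × S => Ψ p.1 p.2 := by
    have h1 : Continuous fun p : ℝ × S => ((max p.1 0, p.2) : ℝ × S) :=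
      (continuous_fst.max continuous_const).prodMk continuous_snd
    exact hΦ_cont.comp_continuous h1 fun p => ⟨mem_Ici.2 (le_max_right _ _), mem_univ _⟩
  have hΨt : ∀ t : ℝ, Continuous fun x => Ψ t x := fun t =>
    hΨc.comp (Continuous.prodMk_right t)
  have hΨeq : ∀ t : ℝ, 0 ≤ t → ∀ x, Ψ t x = Φ t x := by
    intro t ht x; simp only [hΨdef, max_eq_left ht]
  have hΨsemi : ∀ s t : ℝ, 0 ≤ s → 0 ≤ t → ∀ x, Ψ (s + t) x = Ψ s (Ψ t x) := by
    intro s t hs ht x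
    simp only [hΨdef, max_eq_left hs, max_eq_left ht, max_eq_left (by linarith : (0:ℝ) ≤ s + t)]
    exact hΦ_semigroup s t hs ht x
  -- A is forward invariant
  have hAinv : ∀ x ∈ A, ∀ t : ℝ, 0 ≤ t → Φ t x ∈ A := by
    intro x hx t ht
    by_contra hmem
    obtain ⟨W, _, hAW, hW⟩ := hstab {Φ t x}ᶜ isClosed_singleton.isOpen_compl
      (fun a ha h => hmem (by rwa [mem_singleton_iff.1 h] at ha))
    exact hW x (hAW hx) t ht rfl
  -- global bound
  obtain ⟨z, -, hz⟩ := isCompact_univ.exists_isMaxOn ⟨hAne.some, mem_univ _⟩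
    (Metric.continuous_infDist_pt A).continuousOn
  set C : ℝ := Metric.infDist z A with hCdef
  have hC : ∀ y : S, Metric.infDist y A ≤ C := fun y => hz (mem_univ y)
  have hbdd : ∀ x : S, BddAbove (range fun t : ℝ => Metric.infDist (Ψ t x) A) :=
    fun x => ⟨C, by rintro v ⟨t, rfl⟩; exact hC _⟩
  -- the sup function g
  set g : S → ℝ := fun x => ⨆ t : ℝ, Metric.infDist (Ψ t x) A with hgdef
  have hg_ge : ∀ x : S, ∀ t : ℝ, Metric.infDist (Ψ t x) A ≤ g x := fun x t => le_ciSup (hbdd x) t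
  have hΨ0 : ∀ x : S, Ψ 0 x = x := fun x => by
    rw [hΨeq 0 le_rfl]; exact hΦ_zero x
  have hg_nonneg : ∀ x : S, 0 ≤ g x := fun x =>
    le_trans Metric.infDist_nonneg (by simpa [hΨ0 x] using hg_ge x 0)
  have hg_rho : ∀ x : S, Metric.infDist x A ≤ g x := fun x => by
    simpa [hΨ0 x] using hg_ge x 0
  have hgleC : ∀ x : S, g x ≤ C := fun x => ciSup_le fun t => hC _
  have hg_orb : ∀ x : S, ∀ s : ℝ, 0 ≤ s → Metric.infDist (Φ s x) A ≤ g x := by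
    intro x s hs
    have := hg_ge x s; rwa [hΨeq s hs] at this
  have hgmono : ∀ d : ℝ, 0 ≤ d → ∀ y : S, g (Φ d y) ≤ g y := by
    intro d hd y
    apply ciSup_le
    intro u
    have h1 : Ψ u (Φ d y) = Ψ (max u 0 + d) y := by
      simp only [hΨdef, max_eq_left (add_nonneg (le_max_right u 0) hd)]
      exact (hΦ_semigroup _ _ (le_max_right u 0) hd y).symm
    rw [h1]; exact hg_ge y _
  have hgA : ∀ x ∈ A, g x = 0 := by
    intro x hx
    refine le_antisymm (ciSup_le fun t => ?_) (hg_nonneg x)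
    rw [Metric.infDist_zero_of_mem (hAinv x hx _ (le_max_right t 0))]
  -- geometric constants
  obtain ⟨δ₀, hδ₀, hδ₀sub⟩ := hA.exists_thickening_subset_open hW₀o hAW₀
  set δ : ℝ := δ₀ / 2 with hδdef
  have hδ : 0 < δ := by positivity
  set K : Set S := Metric.cthickening δ A with hKdef
  have hKW₀ : K ⊆ W₀ :=
    (Metric.cthickening_subset_thickening' hδ₀ (by simp [hδdef]; linarith) A).trans hδ₀sub
  have hKcomp : IsCompact K := Metric.isClosed_cthickening.isCompact
  set G : Set S := Metric.thickening δ A with hGdef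
  have hGo : IsOpen G := Metric.isOpen_thickening
  have hGK : G ⊆ K := Metric.thickening_subset_cthickening δ A
  -- reaching a neighborhood of A
  have hreach : ∀ W : Set S, IsOpen W → A ⊆ W → ∀ x ∈ W₀, ∃ T : ℝ, 0 ≤ T ∧ Φ T x ∈ W := by
    intro W hWo hAW x hx
    obtain ⟨r, hr, hrW⟩ := hA.exists_thickening_subset_open hWo hAW
    have hev : ∀ᶠ t in atTop, Metric.infDist (Φ t x) A < r :=
      (hW₀attr x hx).eventually (gt_mem_nhds hr)
    obtain ⟨a, ha⟩ := eventually_atTop.1 hev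
    refine ⟨max a 0, le_max_right _ _, hrW ?_⟩
    rw [Metric.mem_thickening_iff_infDist_lt hAne]
    exact ha _ (le_max_left _ _)
  -- uniform absorption
  have hUnif : ∀ η : ℝ, 0 < η → ∃ T : ℝ, 0 ≤ T ∧
      ∀ x ∈ K, ∀ u : ℝ, T ≤ u → Metric.infDist (Φ u x) A < η := by
    intro η hη
    obtain ⟨W₁, hW₁o, hAW₁, hW₁⟩ := hstab (Metric.thickening η A) Metric.isOpen_thickening
      (Metric.self_subset_thickening hη A)
    have hx' : ∀ x : K, ∃ T : ℝ, 0 ≤ T ∧ Φ T (x : S) ∈ W₁ :=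
      fun x => hreach W₁ hW₁o hAW₁ x (hKW₀ x.2)
    choose T hT0 hTW using hx'
    have hcov : K ⊆ ⋃ i : K, (Ψ (T i)) ⁻¹' W₁ := by
      intro x hx
      exact mem_iUnion.2 ⟨⟨x, hx⟩, by rw [mem_preimage, hΨeq _ (hT0 _)]; exact hTW _⟩
    obtain ⟨F, hF⟩ := hKcomp.elim_finite_subcover _ (fun i => hW₁o.preimage (hΨt _)) hcov
    obtain ⟨T₀, hT₀'⟩ := (F.image T).exists_le
    have hT₀ : ∀ i ∈ F, T i ≤ T₀ := fun i hi => hT₀' _ (Finset.mem_image_of_mem T hi)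
    refine ⟨max T₀ 0, le_max_right _ _, ?_⟩
    intro x hx u hu
    obtain ⟨i, hiF, hxi⟩ := mem_iUnion₂.1 (hF hx)
    have h1 : Φ (T i) x ∈ W₁ := by rwa [mem_preimage, hΨeq _ (hT0 i)] at hxi
    have hTiu : T i ≤ u := le_trans (le_trans (hT₀ i hiF) (le_max_left _ _)) hu
    have h2 : Φ u x = Φ (u - T i) (Φ (T i) x) := by
      rw [← hΦ_semigroup _ _ (sub_nonneg.2 hTiu) (hT0 i), sub_add_cancel]
    rw [h2, ← Metric.mem_thickening_iff_infDist_lt hAne]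
    exact hW₁ _ h1 _ (sub_nonneg.2 hTiu)
  -- openness of trapped sets
  have hOopen : ∀ r : ℝ, 0 < r → r ≤ δ →
      IsOpen {x : S | ∀ s : ℝ, 0 ≤ s → Φ s x ∈ Metric.thickening r A} := by
    intro r hr hrδ
    rw [isOpen_iff_forall_mem_open]
    intro x hx
    obtain ⟨Wr, hWro, hAWr, hWr⟩ := hstab (Metric.thickening r A) Metric.isOpen_thickening
      (Metric.self_subset_thickening hr A)
    have hxW₀ : x ∈ W₀ := by
      have hx0 : x ∈ Metric.thickening r A := by
        have := hx 0 le_rfl; rwa [hΦ_zero] at this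
      exact hKW₀ (hGK (Metric.thickening_mono hrδ A hx0))
    obtain ⟨Tx, hTx0, hTxW⟩ := hreach Wr hWro hAWr x hxW₀
    set n : Set (ℝ × S) := (fun p : ℝ × S => Ψ p.1 p.2) ⁻¹' (Metric.thickening r A) with hndef
    have hno : IsOpen n := Metric.isOpen_thickening.preimage hΨc
    have hsubn : Icc (0:ℝ) Tx ×ˢ ({x} : Set S) ⊆ n := by
      rintro ⟨s, y⟩ ⟨⟨hs0, hsT⟩, hy⟩
      rw [mem_singleton_iff] at hy; subst hy
      simp only [hndef, mem_preimage]
      rw [hΨeq _ hs0]; exact hx s hs0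
    obtain ⟨v, w, hvo, hwo, hv, hw, hvw⟩ :=
      generalized_tube_lemma isCompact_Icc isCompact_singleton hno hsubn
    refine ⟨w ∩ (Ψ Tx) ⁻¹' Wr, ?_, hwo.inter (hWro.preimage (hΨt _)),
      ⟨hw rfl, by rw [mem_preimage, hΨeq _ hTx0]; exact hTxW⟩⟩
    rintro y ⟨hyw, hyTx⟩ s hs
    rcases le_total s Tx with hsT | hsT
    · have hn : (s, y) ∈ n := hvw ⟨hv ⟨hs, hsT⟩, hyw⟩
      rwa [hndef, mem_preimage, hΨeq _ hs] at hn
    · have h1 : Φ Tx y ∈ Wr := by rwa [mem_preimage, hΨeq _ hTx0] at hyTx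
      have h2 : Φ s y = Φ (s - Tx) (Φ Tx y) := by
        rw [← hΦ_semigroup _ _ (sub_nonneg.2 hsT) hTx0, sub_add_cancel]
      rw [h2]; exact hWr _ h1 _ (sub_nonneg.2 hsT)
  -- the trapped sets
  set Oout : Set S := {x : S | ∀ s : ℝ, 0 ≤ s → Φ s x ∈ Metric.thickening δ A} with hOoutdef
  set Oin : Set S := {x : S | ∀ s : ℝ, 0 ≤ s → Φ s x ∈ Metric.thickening (δ/2) A} with hOindef
  have hOouto : IsOpen Oout := hOopen δ hδ le_rfl
  have hOout_G : Oout ⊆ G := fun x hx => by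
    have := hx 0 le_rfl; rwa [hΦ_zero] at this
  have hOout_inv : ∀ x ∈ Oout, ∀ t : ℝ, 0 ≤ t → Φ t x ∈ Oout := by
    intro x hx t ht s hs
    rw [← hΦ_semigroup s t hs ht]; exact hx _ (add_nonneg hs ht)
  have hOin_inv : ∀ x ∈ Oin, ∀ t : ℝ, 0 ≤ t → Φ t x ∈ Oin := by
    intro x hx t ht s hs
    rw [← hΦ_semigroup s t hs ht]; exact hx _ (add_nonneg hs ht)
  -- the compact trapped set
  have hCl_sub_out : closure Oin ⊆ Oout := by
    have hclosed : IsClosed {x : S | ∀ s : ℝ, 0 ≤ s → Φ s x ∈ Metric.cthickening (δ/2) A} := by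
      have heq : {x : S | ∀ s : ℝ, 0 ≤ s → Φ s x ∈ Metric.cthickening (δ/2) A}
          = ⋂ (s : ℝ) (_ : 0 ≤ s), Ψ s ⁻¹' (Metric.cthickening (δ/2) A) := by
        ext x
        simp only [mem_setOf_eq, mem_iInter, mem_preimage]
        constructor
        · intro h s hs; rw [hΨeq _ hs]; exact h s hs
        · intro h s hs; rw [← hΨeq _ hs]; exact h s hs
      rw [heq]
      exact isClosed_iInter fun s => isClosed_iInter fun hs =>
        Metric.isClosed_cthickening.preimage (hΨt s)
    have h1 : closure Oin ⊆ {x : S | ∀ s : ℝ, 0 ≤ s → Φ s x ∈ Metric.cthickening (δ/2) A} :=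
      closure_minimal (fun x hx s hs => Metric.thickening_subset_cthickening _ _ (hx s hs)) hclosed
    intro x hx s hs
    exact Metric.cthickening_subset_thickening' hδ (by linarith) A (h1 hx s hs)
  have hCl_inv : ∀ x ∈ closure Oin, ∀ t : ℝ, 0 ≤ t → Φ t x ∈ closure Oin := by
    intro x hx t ht
    have h2 : Ψ t '' Oin ⊆ Oin := by
      rintro _ ⟨y, hy, rfl⟩
      rw [hΨeq _ ht]; exact hOin_inv y hy t ht
    have h3 : Ψ t x ∈ closure Oin :=
      closure_mono h2 (image_closure_subset_closure_image (hΨt t) ⟨x, hx, rfl⟩)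
    rwa [hΨeq _ ht] at h3
  -- continuity of g on G
  have hgcont : ContinuousOn g G := by
    intro x hx
    apply ContinuousAt.continuousWithinAt
    rw [Metric.continuousAt_iff]
    intro ε hε
    have hη : (0:ℝ) < ε / 2 := by linarith
    obtain ⟨T, hT0, hTabs⟩ := hUnif (ε/2) hη
    set n : Set (ℝ × S) := {p : ℝ × S | dist (Ψ p.1 p.2) (Ψ p.1 x) < ε/2} with hndef
    have hfc : Continuous fun p : ℝ × S => dist (Ψ p.1 p.2) (Ψ p.1 x) :=
      Continuous.dist hΨc (hΨc.comp (continuous_fst.prodMk continuous_const))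
    have hno : IsOpen n := isOpen_lt hfc continuous_const
    have hsubn : Icc (0:ℝ) T ×ˢ ({x} : Set S) ⊆ n := by
      rintro ⟨s, y⟩ ⟨-, hy⟩
      rw [mem_singleton_iff] at hy; subst hy
      simpa [hndef] using hη
    obtain ⟨v, w, hvo, hwo, hv, hw, hvw⟩ :=
      generalized_tube_lemma isCompact_Icc isCompact_singleton hno hsubn
    obtain ⟨δ', hδ', hball⟩ := Metric.isOpen_iff.1 (hwo.inter hGo) x ⟨hw rfl, hx⟩
    refine ⟨δ', hδ', ?_⟩
    intro y hy
    have hyw : y ∈ w := (hball hy).1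
    have hyG : y ∈ G := (hball hy).2
    have hclose : ∀ u ∈ Icc (0:ℝ) T, dist (Ψ u y) (Ψ u x) < ε/2 := by
      intro u hu
      have hmem : (u, y) ∈ n := hvw ⟨hv hu, hyw⟩
      simpa [hndef] using hmem
    have key : ∀ z₁ z₂ : S, z₁ ∈ K → (∀ u ∈ Icc (0:ℝ) T, dist (Ψ u z₁) (Ψ u z₂) < ε/2) →
        g z₁ ≤ g z₂ + ε/2 := by
      intro z₁ z₂ hz₁ hcl
      apply ciSup_le
      intro t
      have htmax : Ψ t z₁ = Ψ (max t 0) z₁ := by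
        simp only [hΨdef, max_eq_left (le_max_right t 0)]
      have htmax₂ : Ψ t z₂ = Ψ (max t 0) z₂ := by
        simp only [hΨdef, max_eq_left (le_max_right t 0)]
      rcases le_total (max t 0) T with hT | hT
      · calc Metric.infDist (Ψ t z₁) A
            ≤ Metric.infDist (Ψ t z₂) A + dist (Ψ t z₁) (Ψ t z₂) :=
              Metric.infDist_le_infDist_add_dist
          _ ≤ g z₂ + ε/2 := by
              refine add_le_add (hg_ge z₂ t) ?_
              rw [htmax, htmax₂]
              exact (hcl _ ⟨le_max_right t 0, hT⟩).le
      · have : Metric.infDist (Φ (max t 0) z₁) A < ε/2 := hTabs z₁ hz₁ _ hT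
        rw [htmax, hΨeq _ (le_max_right t 0)]
        exact le_trans this.le (le_add_of_nonneg_left (hg_nonneg z₂))
    have hxK : x ∈ K := hGK hx
    have hyK : y ∈ K := hGK hyG
    have h1 : g y ≤ g x + ε/2 := key y x hyK hclose
    have h2 : g x ≤ g y + ε/2 := by
      refine key x y hxK fun u hu => ?_
      rw [dist_comm]; exact hclose u hu
    rw [Real.dist_eq]
    have : |g y - g x| ≤ ε/2 := abs_le.2 ⟨by linarith, by linarith⟩
    linarith
  -- the integral function P
  set P : S → ℝ := fun x => ∫ s in Ioi (0:ℝ), Real.exp (-s) * g (Ψ s x) with hPdef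
  have hmanti : ∀ x : S, Antitone fun s : ℝ => g (Ψ s x) := by
    intro x s₁ s₂ h12
    have hle : max s₁ 0 ≤ max s₂ 0 := max_le_max h12 le_rfl
    have h1 : Ψ s₂ x = Φ (max s₂ 0 - max s₁ 0) (Ψ s₁ x) := by
      simp only [hΨdef]
      rw [← hΦ_semigroup _ _ (sub_nonneg.2 hle) (le_max_right s₁ 0), sub_add_cancel]
    show g (Ψ s₂ x) ≤ g (Ψ s₁ x)
    rw [h1]
    exact hgmono _ (sub_nonneg.2 hle) _
  have hmajor : IntegrableOn (fun s : ℝ => C * Real.exp (-s)) (Ioi (0:ℝ)) := by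
    have := (exp_neg_integrableOn_Ioi 0 (one_pos)).const_mul C
    simpa [neg_one_mul, IntegrableOn] using this
  have hbound : ∀ x : S, ∀ s : ℝ, ‖Real.exp (-s) * g (Ψ s x)‖ ≤ C * Real.exp (-s) := by
    intro x s
    rw [Real.norm_eq_abs, abs_of_nonneg (mul_nonneg (Real.exp_pos _).le (hg_nonneg _))]
    calc Real.exp (-s) * g (Ψ s x) ≤ Real.exp (-s) * C :=
          mul_le_mul_of_nonneg_left (hgleC _) (Real.exp_pos _).le
      _ = C * Real.exp (-s) := mul_comm _ _
  have hInt : ∀ x : S, IntegrableOn (fun s : ℝ => Real.exp (-s) * g (Ψ s x)) (Ioi 0) := by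
    intro x
    refine Integrable.mono' hmajor ?_ (ae_of_all _ fun s => hbound x s)
    exact ((Real.measurable_exp.comp measurable_neg).mul ((hmanti x).measurable)).aestronglyMeasurable
  have hexpint : ∫ s in Ioi (0:ℝ), Real.exp (-s) = 1 := by
    simpa using integral_exp_neg_Ioi 0
  have hPle : ∀ x : S, P x ≤ g x := by
    intro x
    have hconst : IntegrableOn (fun s : ℝ => Real.exp (-s) * g x) (Ioi (0:ℝ)) := by
      have := (exp_neg_integrableOn_Ioi 0 (one_pos)).mul_const (g x)
      simpa [neg_one_mul, IntegrableOn] using this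
    have h1 : P x ≤ ∫ s in Ioi (0:ℝ), Real.exp (-s) * g x := by
      refine MeasureTheory.setIntegral_mono_on (hInt x) hconst measurableSet_Ioi fun s hs => ?_
      refine mul_le_mul_of_nonneg_left ?_ (Real.exp_pos _).le
      have : g (Ψ s x) ≤ g (Ψ 0 x) := hmanti x (le_of_lt hs)
      rwa [hΨ0 x] at this
    calc P x ≤ ∫ s in Ioi (0:ℝ), Real.exp (-s) * g x := h1
      _ = (∫ s in Ioi (0:ℝ), Real.exp (-s)) * g x := by rw [MeasureTheory.integral_mul_const]
      _ = g x := by rw [hexpint, one_mul]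
  have hPnonneg : ∀ x : S, 0 ≤ P x := fun x =>
    MeasureTheory.setIntegral_nonneg measurableSet_Ioi fun s _ =>
      mul_nonneg (Real.exp_pos _).le (hg_nonneg _)
  have hPA : ∀ x ∈ A, P x = 0 := fun x hx =>
    le_antisymm (by calc P x ≤ g x := hPle x
                    _ = 0 := hgA x hx) (hPnonneg x)
  -- continuity of P on Oout
  have hPcont : ContinuousOn P Oout := by
    intro x₀ hx₀
    refine MeasureTheory.continuousWithinAt_of_dominated
      (bound := fun s : ℝ => C * Real.exp (-s)) ?_ ?_ hmajor ?_
    · exact Eventually.of_forall fun y =>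
        ((Real.measurable_exp.comp measurable_neg).mul ((hmanti y).measurable)).aestronglyMeasurable
    · exact Eventually.of_forall fun y => ae_of_all _ fun s => hbound y s
    · refine (MeasureTheory.ae_restrict_mem measurableSet_Ioi).mono fun s hs => ?_
      have hmaps : MapsTo (Ψ s) Oout G := by
        intro y hy
        rw [hΨeq _ (le_of_lt hs)]
        exact hy s (le_of_lt hs)
      have hcomp : ContinuousOn (fun y => g (Ψ s y)) Oout :=
        hgcont.comp (hΨt s).continuousOn hmaps
      exact continuousWithinAt_const.mul (hcomp x₀ hx₀)
  have hLcont : ContinuousOn (fun x => g x + P x) Oout :=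
    (hgcont.mono hOout_G).add hPcont
  -- the candidate sets
  set N : Set S := closure Oin ∩ (fun x => g x + P x) ⁻¹' Iic (δ/2) with hNdef
  set Wc : Set S := Oout ∩ (fun x => g x + P x) ⁻¹' Iio (δ/2) with hWcdef
  have hWco : IsOpen Wc := hLcont.isOpen_inter_preimage hOouto isOpen_Iio
  have hWcN : Wc ⊆ N := by
    rintro y ⟨hyO, hyL⟩
    rw [mem_preimage, mem_Iio] at hyL
    have hgy : g y < δ/2 := lt_of_le_of_lt (le_add_of_nonneg_right (hPnonneg y)) hyL
    have hyOin : y ∈ Oin := by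
      intro s hs
      rw [Metric.mem_thickening_iff_infDist_lt hAne]
      exact lt_of_le_of_lt (hg_orb y s hs) hgy
    exact ⟨subset_closure hyOin, le_of_lt hyL⟩
  have hAWc : A ⊆ Wc := by
    intro x hx
    refine ⟨fun s hs => Metric.self_subset_thickening hδ A (hAinv x hx s hs), ?_⟩
    rw [mem_preimage, mem_Iio, hgA x hx, hPA x hx]
    linarith
  -- the main decrease property
  have hmain : ∀ x ∈ N, ∀ t : ℝ, 0 < t → Φ t x ∈ Wc := by
    rintro x ⟨hxC, hxL⟩ t ht
    rw [mem_preimage, mem_Iic] at hxL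
    have hxOout : x ∈ Oout := hCl_sub_out hxC
    have hxK : x ∈ K := hGK (hOout_G hxOout)
    refine ⟨hOout_inv x hxOout t ht.le, ?_⟩
    rw [mem_preimage, mem_Iio]
    by_cases hcase : g (Φ t x) ≤ δ/8
    · have h1 : P (Φ t x) ≤ g (Φ t x) := hPle _
      linarith
    · push_neg at hcase
      -- strict decrease of P
      have hPdec : P (Φ t x) < P x := by
        obtain ⟨T, hT0, hTabs⟩ := hUnif (δ/8) (by linarith)
        set m : ℝ → ℝ := fun s => g (Ψ s x) with hmdef
        have hmT : ∀ s : ℝ, T ≤ s → m s ≤ δ/8 := by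
          intro s hsT
          have hs0 : (0:ℝ) ≤ s := le_trans hT0 hsT
          show g (Ψ s x) ≤ δ/8
          apply ciSup_le
          intro u
          have h1 : Ψ u (Ψ s x) = Φ (max u 0 + s) x := by
            simp only [hΨdef, max_eq_left hs0]
            exact (hΦ_semigroup _ _ (le_max_right u 0) hs0 x).symm
          rw [h1]
          exact (hTabs x hxK _ (by linarith [le_max_right u 0])).le
        have hmt : δ/8 < m t := by
          have h1 : m t = g (Φ t x) := by
            simp only [hmdef]; rw [hΨeq _ ht.le]
          rwa [h1]
        set E : Set ℝ := {s : ℝ | δ/8 < m s} with hEdef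
        have hEne : E.Nonempty := ⟨t, hmt⟩
        have hEbdd : BddAbove E := by
          refine ⟨T, fun s hs => ?_⟩
          by_contra hTs
          push_neg at hTs
          exact absurd (hmT s hTs.le) (not_le.2 hs)
        set s' : ℝ := sSup E with hs'def
        have hts' : t ≤ s' := le_csSup hEbdd hmt
        have hlt : ∀ s : ℝ, s < s' → δ/8 < m s := by
          intro s hs
          obtain ⟨a, haE, hsa⟩ := exists_lt_of_lt_csSup hEne hs
          exact lt_of_lt_of_le haE ((hmanti x) hsa.le)
        have hge : ∀ s : ℝ, s' < s → m s ≤ δ/8 := by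
          intro s hs
          by_contra h
          push_neg at h
          exact absurd (le_csSup hEbdd h) (not_le.2 hs)
        have hPt : P (Φ t x) = ∫ s in Ioi (0:ℝ), Real.exp (-s) * m (s + t) := by
          refine MeasureTheory.setIntegral_congr_fun measurableSet_Ioi fun s hs => ?_
          have h1 : Ψ s (Φ t x) = Ψ (s + t) x := by
            rw [← hΨeq t ht.le]
            exact (hΨsemi s t (le_of_lt hs) ht.le x).symm
          simp only [hmdef]
          rw [h1]
        have hI2 : IntegrableOn (fun s : ℝ => Real.exp (-s) * m (s + t)) (Ioi 0) := by
          refine Integrable.mono' hmajor ?_ (ae_of_all _ fun s => ?_)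
          · have hanti2 : Antitone fun s : ℝ => m (s + t) :=
              (hmanti x).comp_monotone (monotone_id.add_const t)
            exact ((Real.measurable_exp.comp measurable_neg).mul hanti2.measurable).aestronglyMeasurable
          · rw [Real.norm_eq_abs, abs_of_nonneg (mul_nonneg (Real.exp_pos _).le (hg_nonneg _))]
            calc Real.exp (-s) * m (s + t) ≤ Real.exp (-s) * C :=
                  mul_le_mul_of_nonneg_left (hgleC _) (Real.exp_pos _).le
              _ = C * Real.exp (-s) := mul_comm _ _
        have hdiff : 0 < P x - P (Φ t x) := by
          rw [hPt, hPdef, ← MeasureTheory.integral_sub (hInt x) hI2]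
          have h1 : (0 : ℝ → ℝ) ≤ᵐ[MeasureTheory.volume.restrict (Ioi (0:ℝ))]
              fun s => Real.exp (-s) * m s - Real.exp (-s) * m (s + t) := by
            refine ae_of_all _ fun s => ?_
            simp only [Pi.zero_apply]
            have h0 : m (s + t) ≤ m s := (hmanti x) (le_add_of_nonneg_right ht.le)
            have h0' := mul_le_mul_of_nonneg_left h0 (Real.exp_pos (-s)).le
            linarith
          have h2 : IntegrableOn
              (fun s : ℝ => Real.exp (-s) * m s - Real.exp (-s) * m (s + t)) (Ioi 0) :=
            (hInt x).sub hI2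
          rw [MeasureTheory.setIntegral_pos_iff_support_of_nonneg_ae h1 h2]
          have hsub : Ioo (max (s' - t) 0) s' ⊆
              Function.support (fun s : ℝ => Real.exp (-s) * m s - Real.exp (-s) * m (s + t))
                ∩ Ioi 0 := by
            rintro s ⟨hs1, hs2⟩
            have hs0 : (0:ℝ) < s := lt_of_le_of_lt (le_max_right _ _) hs1
            have hs't : s' - t < s := lt_of_le_of_lt (le_max_left _ _) hs1
            have hms : δ/8 < m s := hlt s hs2
            have hmst : m (s + t) ≤ δ/8 := hge (s + t) (by linarith)
            refine ⟨Function.mem_support.2 (ne_of_gt ?_), hs0⟩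
            have := mul_lt_mul_of_pos_left (lt_of_le_of_lt hmst hms) (Real.exp_pos (-s))
            linarith
          refine lt_of_lt_of_le ?_ (MeasureTheory.measure_mono hsub)
          rw [Real.volume_Ioo]
          have hs'pos : 0 < s' := lt_of_lt_of_le ht hts'
          have : max (s' - t) 0 < s' := max_lt (by linarith) hs'pos
          simp [this]
        linarith
      have hg2 : g (Φ t x) ≤ g x := hgmono t ht.le x
      linarith
  -- conclusion
  refine ⟨N, ?_, ?_, ?_⟩
  · refine IsClosed.isCompact ?_
    exact (hLcont.mono hCl_sub_out).preimage_isClosed_of_isClosed isClosed_closure isClosed_Iic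
  · exact fun x hx => interior_maximal hWcN hWco (hAWc hx)
  · intro t ht x hx
    exact interior_maximal hWcN hWco (hmain x hx t ht)
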